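/- Let n ≥ 1 and let T : ℝⁿ×ℝⁿ → ℝⁿ×ℝⁿ be a linear map that splits, with block matrices (α_j, β_j; γ_j, δ_j). Then for every subset A ⊆ {1,…,n} with |A| = k ≥ 2, there exists a subset A' ⊆ A with |A'| ≥ k/2 such that max_{j∈A'} |γ_j| ≤ 4√2·‖T‖/log k. -/

import Mathlib

open scoped BigOperators

/-- The Euclidean norm on `ℝⁿ`. -/
noncomputable def l2 {n : ℕ} (b : Fin n → ℝ) : ℝ := Real.sqrt (∑ j, b j ^ 2)

/-- The Kalton–Peck map `F(b)_j = b_j log(|b_j|/‖b‖₂)`, with `F(b)_j = 0` when `b_j = 0`. -/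
noncomputable def KPF {n : ℕ} (b : Fin n → ℝ) : Fin n → ℝ :=
  fun j => if b j = 0 then 0 else b j * Real.log (|b j| / l2 b)

/-- The Kalton–Peck quasi-norm `‖(a,b)‖ = ‖b‖₂ + ‖a - F(b)‖₂` on `ℝⁿ × ℝⁿ`. -/
noncomputable def znorm {n : ℕ} (x : (Fin n → ℝ) × (Fin n → ℝ)) : ℝ :=
  l2 x.2 + l2 (x.1 - KPF x.2)

/-- Operator "norm" `sup_{x ≠ 0} N_W(T x) / N_V(x)` of a map `T` between spaces
equipped with (quasi-)norms `N_V`, `N_W`. -/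
noncomputable def ratioSup {V W : Type*} [Zero V] (NV : V → ℝ) (NW : W → ℝ) (T : V → W) : ℝ :=
  ⨆ x : {x : V // x ≠ 0}, NW (T x.1) / NV x.1

namespace KPaux
variable {n : ℕ}

noncomputable def toE (b : Fin n → ℝ) : EuclideanSpace ℝ (Fin n) :=
  (WithLp.equiv 2 (∀ _ : Fin n, ℝ)).symm b

lemma l2_eq (b : Fin n → ℝ) : l2 b = ‖toE b‖ := by
  rw [EuclideanSpace.norm_eq]
  simp only [Real.norm_eq_abs, sq_abs]
  rfl

lemma toE_add (a b : Fin n → ℝ) : toE (a + b) = toE a + toE b :=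
  rfl
lemma toE_sub (a b : Fin n → ℝ) : toE (a - b) = toE a - toE b :=
  rfl
lemma toE_smul (c : ℝ) (b : Fin n → ℝ) : toE (c • b) = c • toE b :=
  rfl

lemma l2_nonneg (b : Fin n → ℝ) : 0 ≤ l2 b := Real.sqrt_nonneg _

lemma l2_add_le (a b : Fin n → ℝ) : l2 (a + b) ≤ l2 a + l2 b := by
  rw [l2_eq, l2_eq, l2_eq, toE_add]; exact norm_add_le _ _

lemma l2_smul (c : ℝ) (b : Fin n → ℝ) : l2 (c • b) = |c| * l2 b := by
  rw [l2_eq, l2_eq, toE_smul, norm_smul, Real.norm_eq_abs]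

lemma l2_zero : l2 (0 : Fin n → ℝ) = 0 := by
  simp [l2]

lemma l2_eq_zero {b : Fin n → ℝ} (h : l2 b = 0) : b = 0 := by
  have h2 : toE b = 0 := norm_eq_zero.mp ((l2_eq b) ▸ h)
  funext i
  exact congrFun (congrArg (WithLp.equiv 2 (∀ _ : Fin n, ℝ)) h2) i

lemma l2_sub_le (a b : Fin n → ℝ) : l2 (a - b) ≤ l2 a + l2 b := by
  rw [l2_eq, l2_eq, l2_eq, toE_sub]; exact norm_sub_le _ _

lemma entry_le_l2 (b : Fin n → ℝ) (i : Fin n) : |b i| ≤ l2 b := by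
  rw [← Real.sqrt_sq_eq_abs]
  exact Real.sqrt_le_sqrt (Finset.single_le_sum (fun j _ => sq_nonneg (b j))
    (Finset.mem_univ i))

lemma l2_single (j : Fin n) (c : ℝ) : l2 (Pi.single j c) = |c| := by
  rw [l2]
  have h : ∀ i : Fin n, (Pi.single j c : Fin n → ℝ) i ^ 2 = if i = j then c ^ 2 else 0 := by
    intro i
    rw [Pi.single_apply]
    split <;> simp
  rw [Finset.sum_congr rfl fun i _ => h i, Finset.sum_ite_eq' Finset.univ j fun _ => c ^ 2,
    if_pos (Finset.mem_univ j), Real.sqrt_sq_eq_abs]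

lemma KPF_zero : KPF (0 : Fin n → ℝ) = 0 := by
  funext i; simp [KPF]

lemma KPF_single (j : Fin n) (c : ℝ) : KPF (Pi.single j c) = 0 := by
  funext i
  rw [KPF]
  by_cases hi : i = j
  · subst hi
    rw [Pi.single_eq_same]
    by_cases hc : c = 0
    · simp [hc]
    · rw [if_neg hc, l2_single, div_self (abs_ne_zero.mpr hc), Real.log_one, mul_zero]
      rfl
  · rw [Pi.single_eq_of_ne hi, if_pos rfl]
    rfl

lemma znorm_single_pair (j : Fin n) (a c : ℝ) :
    znorm (Pi.single j a, Pi.single j c) = |c| + |a| := by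
  rw [znorm]
  simp only [KPF_single, sub_zero, l2_single]

lemma znorm_zero_single (j : Fin n) : znorm ((0 : Fin n → ℝ), Pi.single j 1) = 1 := by
  have h := znorm_single_pair j 0 1
  rw [Pi.single_zero] at h
  simpa using h

/-- masked vector -/
noncomputable def mask (A : Finset (Fin n)) (v : Fin n → ℝ) : Fin n → ℝ :=
  fun i => if i ∈ A then v i else 0

lemma l2_mask (A : Finset (Fin n)) (v : Fin n → ℝ) :
    l2 (mask A v) = Real.sqrt (∑ j ∈ A, v j ^ 2) := by
  rw [l2]
  congr 1
  have h : ∀ i : Fin n, mask A v i ^ 2 = if i ∈ A then v i ^ 2 else 0 := by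
    intro i; rw [mask]; split <;> simp
  rw [Finset.sum_congr rfl fun i _ => h i, Finset.sum_ite_mem, Finset.univ_inter]

lemma sum_single (A : Finset (Fin n)) (v : Fin n → ℝ) :
    (∑ j ∈ A, Pi.single j (v j)) = mask A v := by
  funext i
  rw [Finset.sum_apply]
  have h : ∀ j : Fin n, (Pi.single j (v j) : Fin n → ℝ) i = if i = j then v j else 0 := fun j =>
    Pi.single_apply j (v j) i
  rw [Finset.sum_congr rfl fun j _ => h j, Finset.sum_ite_eq]
  rfl

lemma KPF_mask_one (A : Finset (Fin n)) :
    KPF (mask A fun _ => (1 : ℝ)) =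
      (-(Real.log (l2 (mask A fun _ => (1 : ℝ))))) • mask A fun _ => (1 : ℝ) := by
  funext i
  rw [KPF]
  by_cases hi : i ∈ A
  · have h1 : mask A (fun _ => (1 : ℝ)) i = 1 := if_pos hi
    rw [h1, if_neg one_ne_zero, abs_one, one_mul, one_div, Real.log_inv]
    simp [h1]
  · have h1 : mask A (fun _ => (1 : ℝ)) i = 0 := if_neg hi
    rw [h1, if_pos rfl]
    simp [h1]

lemma znorm_nonneg (x : (Fin n → ℝ) × (Fin n → ℝ)) : 0 ≤ znorm x :=
  add_nonneg (l2_nonneg _) (l2_nonneg _)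

lemma znorm_pos {x : (Fin n → ℝ) × (Fin n → ℝ)} (hx : x ≠ 0) : 0 < znorm x := by
  rcases lt_or_eq_of_le (znorm_nonneg x) with h | h
  · exact h
  · exfalso
    apply hx
    have hz : znorm x = l2 x.2 + l2 (x.1 - KPF x.2) := rfl
    have h2 : l2 x.2 = 0 ∧ l2 (x.1 - KPF x.2) = 0 := by
      constructor <;> [skip; skip] <;>
        · have := l2_nonneg x.2
          have := l2_nonneg (x.1 - KPF x.2)
          linarith [h.trans hz]
    have hx2 : x.2 = 0 := l2_eq_zero h2.1
    have hx1 : x.1 - KPF x.2 = 0 := l2_eq_zero h2.2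
    rw [hx2, KPF_zero, sub_zero] at hx1
    exact Prod.ext hx1 hx2

lemma snd_le_znorm (x : (Fin n → ℝ) × (Fin n → ℝ)) : l2 x.2 ≤ znorm x :=
  le_add_of_nonneg_right (l2_nonneg _)

lemma KPF_entry_le (b : Fin n → ℝ) (i : Fin n) : |KPF b i| ≤ l2 b := by
  rw [KPF]
  by_cases h : b i = 0
  · rw [if_pos h, abs_zero]; exact l2_nonneg b
  · rw [if_neg h]
    have hbi : 0 < |b i| := abs_pos.mpr h
    have hl : |b i| ≤ l2 b := entry_le_l2 b i
    have hlpos : 0 < l2 b := lt_of_lt_of_le hbi hl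
    rw [abs_mul]
    have hlog : |Real.log (|b i| / l2 b)| ≤ l2 b / |b i| := by
      have hq : 0 < |b i| / l2 b := div_pos hbi hlpos
      have hq1 : |b i| / l2 b ≤ 1 := div_le_one_of_le₀ hl (le_of_lt hlpos)
      have hneg : Real.log (|b i| / l2 b) ≤ 0 := Real.log_nonpos (le_of_lt hq) hq1
      rw [abs_of_nonpos hneg, ← Real.log_inv]
      have hinv : (|b i| / l2 b)⁻¹ = l2 b / |b i| := by
        rw [inv_div]
      rw [hinv]
      calc Real.log (l2 b / |b i|) ≤ l2 b / |b i| - 1 :=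
            Real.log_le_sub_one_of_pos (div_pos hlpos hbi)
        _ ≤ l2 b / |b i| := by linarith
    calc |b i| * |Real.log (|b i| / l2 b)| ≤ |b i| * (l2 b / |b i|) :=
          mul_le_mul_of_nonneg_left hlog (abs_nonneg _)
      _ = l2 b := by field_simp
end KPaux
namespace KPaux
variable {n : ℕ}

lemma l2_KPF_le (b : Fin n → ℝ) : l2 (KPF b) ≤ Real.sqrt n * l2 b := by
  have h1 : ∑ i, KPF b i ^ 2 ≤ ∑ _i : Fin n, l2 b ^ 2 := by
    refine Finset.sum_le_sum fun i _ => ?_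
    rw [← sq_abs]
    exact pow_le_pow_left₀ (abs_nonneg _) (KPF_entry_le b i) 2
  have h2 : ∑ _i : Fin n, l2 b ^ 2 = (n : ℝ) * l2 b ^ 2 := by
    rw [Finset.sum_const, Finset.card_univ, Fintype.card_fin, nsmul_eq_mul]
  calc l2 (KPF b) = Real.sqrt (∑ i, KPF b i ^ 2) := rfl
    _ ≤ Real.sqrt ((n : ℝ) * l2 b ^ 2) := Real.sqrt_le_sqrt (h2 ▸ h1)
    _ = Real.sqrt n * l2 b := by
        rw [Real.sqrt_mul (Nat.cast_nonneg n), Real.sqrt_sq (l2_nonneg b)]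

lemma l2_le_sqrt_mul_norm (b : Fin n → ℝ) : l2 b ≤ Real.sqrt n * ‖b‖ := by
  have h1 : ∑ i, b i ^ 2 ≤ ∑ _i : Fin n, ‖b‖ ^ 2 := by
    refine Finset.sum_le_sum fun i _ => ?_
    rw [← sq_abs]
    exact pow_le_pow_left₀ (abs_nonneg _) (norm_le_pi_norm b i) 2
  have h2 : ∑ _i : Fin n, ‖b‖ ^ 2 = (n : ℝ) * ‖b‖ ^ 2 := by
    rw [Finset.sum_const, Finset.card_univ, Fintype.card_fin, nsmul_eq_mul]
  calc l2 b = Real.sqrt (∑ i, b i ^ 2) := rfl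
    _ ≤ Real.sqrt ((n : ℝ) * ‖b‖ ^ 2) := Real.sqrt_le_sqrt (h2 ▸ h1)
    _ = Real.sqrt n * ‖b‖ := by
        rw [Real.sqrt_mul (Nat.cast_nonneg n), Real.sqrt_sq (norm_nonneg b)]

lemma norm_le_l2 (b : Fin n → ℝ) : ‖b‖ ≤ l2 b := by
  refine (pi_norm_le_iff_of_nonneg (l2_nonneg b)).mpr fun i => ?_
  rw [Real.norm_eq_abs]
  exact entry_le_l2 b i

lemma exists_bound (T : ((Fin n → ℝ) × (Fin n → ℝ)) →ₗ[ℝ] ((Fin n → ℝ) × (Fin n → ℝ))) :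
    ∃ M : ℝ, ∀ x, znorm (T x) ≤ M * znorm x := by
  set Tc := LinearMap.toContinuousLinearMap T with hTc
  set K := ‖Tc‖ with hK
  have hK0 : 0 ≤ K := norm_nonneg _
  have hTcx : ∀ x, Tc x = T x := fun x => rfl
  refine ⟨(2 + Real.sqrt n) * Real.sqrt n * K * (2 + Real.sqrt n), fun x => ?_⟩
  have hsq : (0:ℝ) ≤ Real.sqrt n := Real.sqrt_nonneg n
  have h1 : znorm (T x) ≤ (2 + Real.sqrt n) * Real.sqrt n * ‖T x‖ := by
    have e1 : znorm (T x) = l2 (T x).2 + l2 ((T x).1 - KPF (T x).2) := rfl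
    have a1 : l2 ((T x).1 - KPF (T x).2) ≤ l2 (T x).1 + l2 (KPF (T x).2) := l2_sub_le _ _
    have a2 : l2 (KPF (T x).2) ≤ Real.sqrt n * l2 (T x).2 := l2_KPF_le _
    have b1 : l2 (T x).1 ≤ Real.sqrt n * ‖T x‖ :=
      le_trans (l2_le_sqrt_mul_norm _)
        (mul_le_mul_of_nonneg_left (norm_fst_le (T x)) hsq)
    have b2 : l2 (T x).2 ≤ Real.sqrt n * ‖T x‖ :=
      le_trans (l2_le_sqrt_mul_norm _)
        (mul_le_mul_of_nonneg_left (norm_snd_le (T x)) hsq)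
    have b3 : Real.sqrt n * l2 (T x).2 ≤ Real.sqrt n * (Real.sqrt n * ‖T x‖) :=
      mul_le_mul_of_nonneg_left b2 hsq
    nlinarith [a1, a2, b1, b2, b3]
  have h2 : ‖T x‖ ≤ K * ‖x‖ := by
    have := Tc.le_opNorm x
    rwa [hTcx] at this
  have h3 : ‖x‖ ≤ (2 + Real.sqrt n) * znorm x := by
    have c1 : ‖x‖ ≤ ‖x.1‖ + ‖x.2‖ := by
      rw [Prod.norm_def]
      exact max_le (le_add_of_nonneg_right (norm_nonneg _))
        (le_add_of_nonneg_left (norm_nonneg _))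
    have c2 : ‖x.1‖ ≤ l2 x.1 := norm_le_l2 _
    have c3 : ‖x.2‖ ≤ l2 x.2 := norm_le_l2 _
    have d1 : l2 x.1 ≤ l2 (x.1 - KPF x.2) + l2 (KPF x.2) := by
      have := l2_add_le (x.1 - KPF x.2) (KPF x.2)
      rwa [sub_add_cancel] at this
    have d2 : l2 (KPF x.2) ≤ Real.sqrt n * l2 x.2 := l2_KPF_le _
    have d3 : l2 (x.1 - KPF x.2) ≤ znorm x := le_add_of_nonneg_left (l2_nonneg _)
    have d4 : l2 x.2 ≤ znorm x := snd_le_znorm x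
    have d5 : Real.sqrt n * l2 x.2 ≤ Real.sqrt n * znorm x :=
      mul_le_mul_of_nonneg_left d4 hsq
    nlinarith [c1, c2, c3, d1, d2, d3, d4, d5]
  calc znorm (T x) ≤ (2 + Real.sqrt n) * Real.sqrt n * ‖T x‖ := h1
    _ ≤ (2 + Real.sqrt n) * Real.sqrt n * (K * ‖x‖) :=
        mul_le_mul_of_nonneg_left h2 (by positivity)
    _ ≤ (2 + Real.sqrt n) * Real.sqrt n * (K * ((2 + Real.sqrt n) * znorm x)) :=
        mul_le_mul_of_nonneg_left (mul_le_mul_of_nonneg_left h3 hK0) (by positivity)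
    _ = (2 + Real.sqrt n) * Real.sqrt n * K * (2 + Real.sqrt n) * znorm x := by ring

lemma znorm_zero : znorm (0 : (Fin n → ℝ) × (Fin n → ℝ)) = 0 := by
  have : znorm (0 : (Fin n → ℝ) × (Fin n → ℝ)) =
      l2 (0 : Fin n → ℝ) + l2 ((0 : Fin n → ℝ) - KPF 0) := rfl
  rw [this, KPF_zero, sub_zero, l2_zero, add_zero]

lemma ratioSup_nonneg (T : ((Fin n → ℝ) × (Fin n → ℝ)) →ₗ[ℝ] ((Fin n → ℝ) × (Fin n → ℝ))) :
    0 ≤ ratioSup znorm znorm (fun x => T x) :=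
  Real.iSup_nonneg fun y => div_nonneg (znorm_nonneg _) (znorm_nonneg _)

lemma znorm_T_le (T : ((Fin n → ℝ) × (Fin n → ℝ)) →ₗ[ℝ] ((Fin n → ℝ) × (Fin n → ℝ)))
    (x : (Fin n → ℝ) × (Fin n → ℝ)) :
    znorm (T x) ≤ ratioSup znorm znorm (fun x => T x) * znorm x := by
  by_cases hx : x = 0
  · subst hx
    rw [map_zero, znorm_zero, mul_zero]
  · have hzx := znorm_pos hx
    obtain ⟨M, hM⟩ := exists_bound T
    have hbdd : BddAbove (Set.range fun y : {y : (Fin n → ℝ) × (Fin n → ℝ) // y ≠ 0} =>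
        znorm (T y.1) / znorm y.1) := by
      refine ⟨M, ?_⟩
      rintro r ⟨y, rfl⟩
      exact (div_le_iff₀ (znorm_pos y.2)).mpr (hM y.1)
    have hle : znorm (T x) / znorm x ≤ ratioSup znorm znorm (fun x => T x) :=
      le_ciSup hbdd (⟨x, hx⟩ : {y : (Fin n → ℝ) × (Fin n → ℝ) // y ≠ 0})
    calc znorm (T x) = znorm (T x) / znorm x * znorm x := by field_simp
      _ ≤ ratioSup znorm znorm (fun x => T x) * znorm x :=
          mul_le_mul_of_nonneg_right hle (le_of_lt hzx)

end KPaux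

open KPaux

/-- For a splitting operator `T` on `Z_2^n` and any `A ⊆ {1,…,n}` with `|A| = k ≥ 2`,
there is `A' ⊆ A` with `|A'| ≥ k/2` on which `|γ_j| ≤ 4√2·‖T‖/log k`. -/
theorem split_gamma_subset_bound (n : ℕ) (hn : 1 ≤ n)
    (T : ((Fin n → ℝ) × (Fin n → ℝ)) →ₗ[ℝ] ((Fin n → ℝ) × (Fin n → ℝ)))
    (α β γ δ : Fin n → ℝ)
    (hT : ∀ j : Fin n,
      T (Pi.single j 1, 0) = (Pi.single j (α j), Pi.single j (γ j)) ∧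
      T (0, Pi.single j 1) = (Pi.single j (β j), Pi.single j (δ j))) :
    ∀ A : Finset (Fin n), 2 ≤ A.card →
      ∃ A' ⊆ A, (A.card : ℝ) / 2 ≤ (A'.card : ℝ) ∧
        ∀ j ∈ A', |γ j| ≤
          4 * Real.sqrt 2 * ratioSup znorm znorm (fun x => T x) / Real.log (A.card : ℝ) := by
  intro A hA
  set C := ratioSup znorm znorm (fun x : (Fin n → ℝ) × (Fin n → ℝ) => T x) with hCdef
  have hC0 : 0 ≤ C := ratioSup_nonneg T
  have hTle : ∀ x, znorm (T x) ≤ C * znorm x := fun x => znorm_T_le T x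
  have hk2 : (2 : ℝ) ≤ (A.card : ℝ) := by exact_mod_cast hA
  have hlog : 0 < Real.log (A.card : ℝ) := Real.log_pos (by linarith)
  -- Step 1: |δ j| ≤ C for all j
  have hδ : ∀ j : Fin n, |δ j| ≤ C := by
    intro j
    have h := hTle ((0 : Fin n → ℝ), Pi.single j 1)
    rw [(hT j).2, znorm_single_pair, znorm_zero_single, mul_one] at h
    have hb := abs_nonneg (β j)
    linarith
  -- Step 2: the key l2 estimate
  set b : Fin n → ℝ := mask A (fun _ => (1 : ℝ)) with hbdef
  have hl2b : l2 b = Real.sqrt (A.card : ℝ) := by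
    rw [hbdef, l2_mask]
    simp
  set L := Real.log (l2 b) with hL
  have hLval : L = Real.log (A.card : ℝ) / 2 := by
    rw [hL, hl2b, Real.log_sqrt (Nat.cast_nonneg A.card)]
  have hL0 : 0 ≤ L := by rw [hLval]; linarith
  have hKPFb : KPF b = (-L) • b := by
    rw [hL, hbdef]
    exact KPF_mask_one A
  have hzx : znorm ((-L) • b, b) = Real.sqrt (A.card : ℝ) := by
    have e1 : znorm ((-L) • b, b) = l2 b + l2 ((-L) • b - KPF b) := rfl
    rw [e1, hKPFb, sub_self, l2_zero, add_zero, hl2b]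
  have hx_decomp : (((-L) • b, b) : (Fin n → ℝ) × (Fin n → ℝ)) =
      ∑ j ∈ A, ((-L) • ((Pi.single j 1 : Fin n → ℝ), (0 : Fin n → ℝ)) +
        ((0 : Fin n → ℝ), (Pi.single j 1 : Fin n → ℝ))) := by
    apply Prod.ext
    · rw [Prod.fst_sum]
      simp only [Prod.fst_add, Prod.smul_fst, add_zero]
      rw [← Finset.smul_sum]
      have := sum_single A (fun _ : Fin n => (1 : ℝ))
      rw [this, hbdef]
    · rw [Prod.snd_sum]
      simp only [Prod.snd_add, Prod.smul_snd, smul_zero, zero_add]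
      rw [sum_single A (fun _ : Fin n => (1 : ℝ)), hbdef]
  have hTx : T ((-L) • b, b) =
      (mask A (fun i => -L * α i + β i), mask A (fun i => -L * γ i + δ i)) := by
    rw [hx_decomp, map_sum]
    have hterm : ∀ j ∈ A,
        T ((-L) • ((Pi.single j 1 : Fin n → ℝ), (0 : Fin n → ℝ)) +
          ((0 : Fin n → ℝ), (Pi.single j 1 : Fin n → ℝ))) =
        ((Pi.single j (-L * α j + β j) : Fin n → ℝ),
         (Pi.single j (-L * γ j + δ j) : Fin n → ℝ)) := by
      intro j _
      rw [map_add, map_smul, (hT j).1, (hT j).2]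
      apply Prod.ext <;> funext i <;>
        simp only [Prod.fst_add, Prod.smul_fst, Prod.snd_add, Prod.smul_snd, Pi.add_apply,
          Pi.smul_apply, smul_eq_mul, Pi.single_apply] <;>
        split <;> ring
    rw [Finset.sum_congr rfl hterm]
    apply Prod.ext
    · rw [Prod.fst_sum]
      exact sum_single A _
    · rw [Prod.snd_sum]
      exact sum_single A _
  have hbound1 : l2 (mask A fun i => -L * γ i + δ i) ≤ C * Real.sqrt (A.card : ℝ) := by
    have h1 : l2 (mask A fun i => -L * γ i + δ i) ≤ znorm (T ((-L) • b, b)) := by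
      rw [hTx]
      exact snd_le_znorm
        ((mask A fun i => -L * α i + β i, mask A fun i => -L * γ i + δ i) :
          (Fin n → ℝ) × (Fin n → ℝ))
    calc l2 (mask A fun i => -L * γ i + δ i) ≤ znorm (T ((-L) • b, b)) := h1
      _ ≤ C * znorm ((-L) • b, b) := hTle _
      _ = C * Real.sqrt (A.card : ℝ) := by rw [hzx]
  have hδsum : l2 (mask A fun i => δ i) ≤ Real.sqrt (A.card : ℝ) * C := by
    rw [l2_mask]
    have h1 : ∑ j ∈ A, δ j ^ 2 ≤ ∑ _j ∈ A, C ^ 2 := by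
      refine Finset.sum_le_sum fun j _ => ?_
      rw [← sq_abs]
      exact pow_le_pow_left₀ (abs_nonneg _) (hδ j) 2
    have h2 : ∑ _j ∈ A, C ^ 2 = (A.card : ℝ) * C ^ 2 := by
      rw [Finset.sum_const, nsmul_eq_mul]
    calc Real.sqrt (∑ j ∈ A, δ j ^ 2) ≤ Real.sqrt ((A.card : ℝ) * C ^ 2) :=
          Real.sqrt_le_sqrt (h2 ▸ h1)
      _ = Real.sqrt (A.card : ℝ) * C := by
          rw [Real.sqrt_mul (Nat.cast_nonneg A.card), Real.sqrt_sq hC0]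
  have hsmul : mask A (fun i => L * γ i) = L • mask A (fun i => γ i) := by
    funext i
    simp only [mask, Pi.smul_apply, smul_eq_mul]
    split <;> simp
  have hdecT : mask A (fun i => L * γ i) =
      mask A (fun i => δ i) - mask A (fun i => -L * γ i + δ i) := by
    funext i
    simp only [mask, Pi.sub_apply]
    split <;> ring
  have htri : L * l2 (mask A fun i => γ i) ≤ 2 * C * Real.sqrt (A.card : ℝ) := by
    have h1 : l2 (mask A fun i => L * γ i) = L * l2 (mask A fun i => γ i) := by
      rw [hsmul, l2_smul, abs_of_nonneg hL0]
    have h2 : l2 (mask A fun i => L * γ i) ≤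
        l2 (mask A fun i => δ i) + l2 (mask A fun i => -L * γ i + δ i) := by
      rw [hdecT]
      exact l2_sub_le _ _
    linarith
  have hsum_nonneg : 0 ≤ ∑ j ∈ A, γ j ^ 2 := Finset.sum_nonneg fun j _ => sq_nonneg _
  have hS2 : l2 (mask A fun i => γ i) ^ 2 = ∑ j ∈ A, γ j ^ 2 := by
    rw [l2_mask, Real.sq_sqrt hsum_nonneg]
  have hlin : Real.log (A.card : ℝ) * l2 (mask A fun i => γ i) ≤
      4 * C * Real.sqrt (A.card : ℝ) := by
    rw [hLval] at htri
    linarith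
  have hsum_bound : Real.log (A.card : ℝ) ^ 2 * (∑ j ∈ A, γ j ^ 2) ≤
      16 * C ^ 2 * (A.card : ℝ) := by
    have hnn : 0 ≤ Real.log (A.card : ℝ) * l2 (mask A fun i => γ i) :=
      mul_nonneg (le_of_lt hlog) (l2_nonneg _)
    have hsq := pow_le_pow_left₀ hnn hlin 2
    calc Real.log (A.card : ℝ) ^ 2 * (∑ j ∈ A, γ j ^ 2)
        = (Real.log (A.card : ℝ) * l2 (mask A fun i => γ i)) ^ 2 := by
          rw [← hS2]; ring
      _ ≤ (4 * C * Real.sqrt (A.card : ℝ)) ^ 2 := hsq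
      _ = 16 * C ^ 2 * (Real.sqrt (A.card : ℝ) ^ 2) := by ring
      _ = 16 * C ^ 2 * (A.card : ℝ) := by rw [Real.sq_sqrt (Nat.cast_nonneg A.card)]
  -- Step 3: Markov
  set t := 4 * Real.sqrt 2 * C / Real.log (A.card : ℝ) with htdef
  set A' := A.filter (fun j => |γ j| ≤ t) with hA'def
  refine ⟨A', Finset.filter_subset _ _, ?_, fun j hj => (Finset.mem_filter.mp hj).2⟩
  by_contra hcard
  push_neg at hcard
  set s := A \ A' with hsdef
  have hsub : A' ⊆ A := Finset.filter_subset _ _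
  have hscard : (s.card : ℝ) = (A.card : ℝ) - (A'.card : ℝ) := by
    rw [hsdef, Finset.card_sdiff_of_subset hsub]
    have := Finset.card_le_card hsub
    push_cast [Nat.cast_sub this]
    ring
  have hs_half : (A.card : ℝ) / 2 < (s.card : ℝ) := by
    rw [hscard]; linarith
  have hs_ne : s.Nonempty := by
    refine Finset.card_pos.mp ?_
    have h0 : (0 : ℝ) < (s.card : ℝ) := lt_of_le_of_lt (by linarith) hs_half
    exact_mod_cast h0
  have hmem : ∀ j ∈ s, t ^ 2 < γ j ^ 2 := by
    intro j hj
    obtain ⟨hjA, hjn⟩ := Finset.mem_sdiff.mp hj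
    have hgt : t < |γ j| := by
      by_contra hle
      push_neg at hle
      exact hjn (Finset.mem_filter.mpr ⟨hjA, hle⟩)
    have ht0 : 0 ≤ t := by rw [htdef]; positivity
    have hsa := sq_abs (γ j)
    nlinarith [hgt, ht0, hsa]
  have hstrict : (s.card : ℝ) * t ^ 2 < ∑ j ∈ s, γ j ^ 2 := by
    have h := Finset.sum_lt_sum_of_nonempty hs_ne hmem
    rwa [Finset.sum_const, nsmul_eq_mul] at h
  have hchain : ∑ j ∈ s, γ j ^ 2 ≤ ∑ j ∈ A, γ j ^ 2 :=
    Finset.sum_le_sum_of_subset_of_nonneg Finset.sdiff_subset (fun j _ _ => sq_nonneg _)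
  have hlgsq : (0 : ℝ) < Real.log (A.card : ℝ) ^ 2 := pow_pos hlog 2
  have ht2 : Real.log (A.card : ℝ) ^ 2 * t ^ 2 = 32 * C ^ 2 := by
    have hne : Real.log (A.card : ℝ) ^ 2 ≠ 0 := ne_of_gt hlgsq
    have h2 : Real.sqrt 2 ^ 2 = 2 := Real.sq_sqrt (by norm_num)
    rw [htdef, div_pow, mul_comm, div_mul_cancel₀ _ hne, mul_pow, mul_pow, h2]
    ring
  have key1 : (s.card : ℝ) * (32 * C ^ 2) <
      Real.log (A.card : ℝ) ^ 2 * ∑ j ∈ s, γ j ^ 2 := by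
    have h := mul_lt_mul_of_pos_left hstrict hlgsq
    calc (s.card : ℝ) * (32 * C ^ 2)
        = Real.log (A.card : ℝ) ^ 2 * ((s.card : ℝ) * t ^ 2) := by rw [← ht2]; ring
      _ < Real.log (A.card : ℝ) ^ 2 * ∑ j ∈ s, γ j ^ 2 := h
  have key2 : Real.log (A.card : ℝ) ^ 2 * ∑ j ∈ s, γ j ^ 2 ≤ 16 * C ^ 2 * (A.card : ℝ) :=
    le_trans (mul_le_mul_of_nonneg_left hchain (le_of_lt hlgsq)) hsum_bound
  have key3 : (A.card : ℝ) / 2 * (32 * C ^ 2) ≤ (s.card : ℝ) * (32 * C ^ 2) :=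
    mul_le_mul_of_nonneg_right hs_half.le (by positivity)
  linarith
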